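/- arXiv:1109.2967 — 4 statements merged into one kernel-verified Lean document; each statement's English description precedes it below -/
import Mathlib

section
/- For every integer m and every measurable function f : ℂ² → ℂ, one has the identity in [0,∞]: ∫_H |w₂|^{2m} |f(w₁/w₂, w₂)|² dV(w) = ∫_P |z₂|^{2(m+1)} |f(z₁,z₂)|² dV(z). In particular, the pullback f ↦ f∘F under F(w₁,w₂) = (w₁/w₂,w₂) is an isometry from the weighted space L²(P,(m+1)Φ) onto L²(H,mΦ). -/
open MeasureTheory Complex

open scoped ENNReal

noncomputable section

/-- The Hartogs triangle. -/
def Hartogs : Set (ℂ × ℂ) := {w | ‖w.1‖ < ‖w.2‖ ∧ ‖w.2‖ < 1}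

/-- The product domain `P = D × D*`, the product of the unit disc and the punctured unit disc. -/
def Pdom : Set (ℂ × ℂ) :=
  {z | ‖z.1‖ < 1 ∧ (0 < ‖z.2‖ ∧ ‖z.2‖ < 1)}

private lemma scale_lintegral (c : ℂ) (hc : c ≠ 0) (g : ℂ → ℝ≥0∞) (hg : Measurable g) :
    ∫⁻ x, g x = ENNReal.ofReal (Complex.normSq c) * ∫⁻ x, g (c * x) := by
  have hdet : LinearMap.det (Algebra.lmul ℝ ℂ c : ℂ →ₗ[ℝ] ℂ) = Complex.normSq c := by
    rw [← Algebra.norm_apply, Algebra.norm_complex_apply]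
  have hdet0 : LinearMap.det (Algebra.lmul ℝ ℂ c : ℂ →ₗ[ℝ] ℂ) ≠ 0 := by
    rw [hdet]; simpa using hc
  have hmap := Measure.map_linearMap_addHaar_eq_smul_addHaar (volume : Measure ℂ) hdet0
  have h1 : ∫⁻ x, g ((Algebra.lmul ℝ ℂ c : ℂ →ₗ[ℝ] ℂ) x)
      = ∫⁻ y, g y ∂(Measure.map (Algebra.lmul ℝ ℂ c : ℂ →ₗ[ℝ] ℂ) volume) := by
    rw [lintegral_map hg]
    exact (Algebra.lmul ℝ ℂ c : ℂ →ₗ[ℝ] ℂ).continuous_of_finiteDimensional.measurable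
  rw [hmap, lintegral_smul_measure, hdet] at h1
  have habs : |(Complex.normSq c : ℝ)⁻¹| = (Complex.normSq c)⁻¹ :=
    _root_.abs_of_nonneg (inv_nonneg.mpr (Complex.normSq_nonneg c))
  rw [habs] at h1
  have hpos : (0:ℝ) < Complex.normSq c := Complex.normSq_pos.mpr hc
  have h2 : ENNReal.ofReal (Complex.normSq c) * ∫⁻ x, g (c * x)
      = ENNReal.ofReal (Complex.normSq c) * (ENNReal.ofReal (Complex.normSq c)⁻¹ * ∫⁻ y, g y) := by
    rw [← smul_eq_mul (ENNReal.ofReal (Complex.normSq c)⁻¹), ← h1]; rfl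
  rw [h2, ← mul_assoc, ← ENNReal.ofReal_mul hpos.le, mul_inv_cancel₀ hpos.ne',
    ENNReal.ofReal_one, one_mul]

theorem pullback_isometry_weighted_L2 (m : ℤ) (f : ℂ × ℂ → ℂ) (hf : Measurable f) :
    (∫⁻ w in Hartogs,
        ENNReal.ofReal (‖w.2‖ ^ (2 * m) * ‖f (w.1 / w.2, w.2)‖ ^ 2))
      = ∫⁻ z in Pdom,
          ENNReal.ofReal (‖z.2‖ ^ (2 * (m + 1)) * ‖f z‖ ^ 2) := by
  set GH : ℂ × ℂ → ℝ≥0∞ :=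
    fun w => ENNReal.ofReal (‖w.2‖ ^ (2 * m) * ‖f (w.1 / w.2, w.2)‖ ^ 2) with hGHdef
  set GP : ℂ × ℂ → ℝ≥0∞ :=
    fun z => ENNReal.ofReal (‖z.2‖ ^ (2 * (m + 1)) * ‖f z‖ ^ 2) with hGPdef
  have mabs1 : Measurable fun w : ℂ × ℂ => ‖w.1‖ :=
    (continuous_norm.comp continuous_fst).measurable
  have mabs2 : Measurable fun w : ℂ × ℂ => ‖w.2‖ :=
    (continuous_norm.comp continuous_snd).measurable
  have hH : MeasurableSet Hartogs :=
    (measurableSet_lt mabs1 mabs2).inter (measurableSet_lt mabs2 measurable_const)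
  have hP : MeasurableSet Pdom :=
    (measurableSet_lt mabs1 measurable_const).inter
      ((measurableSet_lt measurable_const mabs2).inter
        (measurableSet_lt mabs2 measurable_const))
  have hGH : Measurable GH := by
    apply Measurable.ennreal_ofReal
    exact (mabs2.pow_const (2 * m)).mul
      ((hf.comp ((measurable_fst.div measurable_snd).prodMk measurable_snd)).norm.pow_const 2)
  have hGP : Measurable GP := by
    apply Measurable.ennreal_ofReal
    exact (mabs2.pow_const (2 * (m + 1))).mul (hf.norm.pow_const 2)
  rw [← lintegral_indicator hH, ← lintegral_indicator hP]
  rw [show (volume : Measure (ℂ × ℂ)) = (volume : Measure ℂ).prod volume from Measure.volume_eq_prod ..]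
  rw [lintegral_prod_symm' _ (hGH.indicator hH), lintegral_prod_symm' _ (hGP.indicator hP)]
  refine lintegral_congr fun c => ?_
  by_cases hc : c = 0
  · subst hc
    have e1 : ∀ x : ℂ, Hartogs.indicator GH (x, 0) = 0 := by
      intro x
      apply Set.indicator_of_notMem
      intro hx
      simp only [Hartogs, Set.mem_setOf_eq, norm_zero] at hx
      exact (norm_nonneg x).not_gt hx.1
    have e2 : ∀ x : ℂ, Pdom.indicator GP (x, 0) = 0 := by
      intro x
      apply Set.indicator_of_notMem
      intro hx
      simp only [Pdom, Set.mem_setOf_eq, norm_zero] at hx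
      exact lt_irrefl 0 hx.2.1
    simp [e1, e2]
  · have h0 : ‖c‖ ≠ 0 := norm_ne_zero_iff.mpr hc
    have hcpos : 0 < ‖c‖ := (norm_pos_iff.mpr hc)
    have gmeas : Measurable fun x : ℂ => Hartogs.indicator GH (x, c) :=
      (hGH.indicator hH).comp (measurable_id.prodMk measurable_const)
    rw [scale_lintegral c hc _ gmeas, ← lintegral_const_mul' _ _ ENNReal.ofReal_ne_top]
    refine lintegral_congr fun x => ?_
    by_cases hx : ‖x‖ < 1 ∧ ‖c‖ < 1
    · have hmemH : (c * x, c) ∈ Hartogs := by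
        refine ⟨?_, hx.2⟩
        simp only [Hartogs, Set.mem_setOf_eq, norm_mul]
        calc ‖c‖ * ‖x‖ < ‖c‖ * 1 := by
              exact mul_lt_mul_of_pos_left hx.1 hcpos
          _ = ‖c‖ := mul_one _
      have hmemP : (x, c) ∈ Pdom := ⟨hx.1, hcpos, hx.2⟩
      rw [Set.indicator_of_mem hmemH, Set.indicator_of_mem hmemP]
      have hdiv : c * x / c = x := mul_div_cancel_left₀ x hc
      simp only [hGHdef, hGPdef, hdiv]
      rw [← ENNReal.ofReal_mul (Complex.normSq_nonneg c)]
      congr 1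
      have hnsq : Complex.normSq c = ‖c‖ ^ (2:ℤ) := by
        rw [← Complex.sq_norm, zpow_two, sq]
      rw [hnsq, ← mul_assoc, ← zpow_add₀ h0, show (2:ℤ) + 2 * m = 2 * (m + 1) by ring]
    · have hmemH : (c * x, c) ∉ Hartogs := by
        intro hmem
        apply hx
        refine ⟨?_, hmem.2⟩
        have := hmem.1
        simp only [Hartogs, Set.mem_setOf_eq, norm_mul] at this
        exact lt_of_mul_lt_mul_left (by simpa [mul_comm] using this) hcpos.le
      have hmemP : (x, c) ∉ Pdom := by
        intro hmem
        exact hx ⟨hmem.1, hmem.2.2⟩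
      rw [Set.indicator_of_notMem hmemH, Set.indicator_of_notMem hmemP, mul_zero]
end
end

section
/- Let ℓ be an integer. If h is holomorphic on D* and ∫_{D*} |z|^{2ℓ} |h(z)|² dV(z) < ∞, then there exists f holomorphic on the unit disc D with ∫_D |f(z)|² dV(z) < ∞ such that h(z) = z^{−ℓ} f(z) for all z ∈ D*; that is, every element of the weighted Bergman space of the punctured disc with weight |z|^{2ℓ} is z^{−ℓ} times a square-integrable holomorphic function on the full disc. -/
open MeasureTheory Complex

noncomputable section

/-- The punctured open unit disc. -/
def Dstar : Set ℂ := {z | 0 < ‖z‖ ∧ ‖z‖ < 1}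

open Metric Set Filter Topology intervalIntegral
open scoped Real ENNReal

lemma circle_mean (f : ℂ → ℂ) {c : ℂ} {r : ℝ} (hr : 0 < r)
    (hd : DifferentiableOn ℂ f (closedBall c r)) :
    ‖f c‖ * (2 * π) ≤ ∫ θ in (0:ℝ)..(2 * π), ‖f (circleMap c r θ)‖ := by
  have hc : c ∈ ball c r := mem_ball_self hr
  have h1 := hd.circleIntegral_sub_inv_smul hc
  have h2 : (∮ z in C(c, r), (z - c)⁻¹ • f z)
      = ∫ θ in (0:ℝ)..(2 * π), I • f (circleMap c r θ) := by
    rw [circleIntegral]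
    refine intervalIntegral.integral_congr fun θ _ => ?_
    have hne : circleMap 0 r θ ≠ 0 := circleMap_ne_center hr.ne' (c := 0)
    simp only [deriv_circleMap, circleMap_sub_center, smul_eq_mul]
    field_simp
  rw [h2, intervalIntegral.integral_smul] at h1
  have h3 : (∫ θ in (0:ℝ)..(2 * π), f (circleMap c r θ)) = (2 * π : ℝ) • f c := by
    have hI : (I : ℂ) ≠ 0 := I_ne_zero
    simp only [smul_eq_mul, real_smul] at h1 ⊢
    have h1' : I * ∫ (x : ℝ) in (0:ℝ)..2 * π, f (circleMap c r x) = I * ((2 * π : ℝ) * f c) := by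
      rw [h1]; push_cast; ring
    have := mul_left_cancel₀ hI h1'
    rw [this]
  have h4 : ‖(2 * π : ℝ) • f c‖ = ‖f c‖ * (2 * π) := by
    rw [norm_smul]
    rw [Real.norm_eq_abs, _root_.abs_of_nonneg Real.two_pi_pos.le, mul_comm]
  calc ‖f c‖ * (2 * π) = ‖(2*π : ℝ) • f c‖ := h4.symm
    _ = ‖∫ θ in (0:ℝ)..(2 * π), f (circleMap c r θ)‖ := by rw [h3]
    _ ≤ ∫ θ in (0:ℝ)..(2 * π), ‖f (circleMap c r θ)‖ :=
        intervalIntegral.norm_integral_le_integral_norm (by positivity)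

set_option maxHeartbeats 1000000 in
lemma area_mean (f : ℂ → ℂ) {c : ℂ} {R : ℝ} (hR : 0 < R)
    (hd : DifferentiableOn ℂ f (closedBall c R)) :
    ‖f c‖ * (π * R ^ 2) ≤ ∫ z in ball c R, ‖f z‖ := by
  have hcont : ContinuousOn f (closedBall c R) := hd.continuousOn
  set G : ℂ → ℝ := (ball c R).indicator (fun z => ‖f z‖) with hG
  set Q : ℝ × ℝ → ℝ := fun p => p.1 * ‖f (circleMap c p.1 p.2)‖ with hQdef
  set S : Set (ℝ × ℝ) := Ioo (0:ℝ) R ×ˢ Ioo (-π) π with hSdef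
  -- continuity of Q on the compact K
  have hφ : Continuous fun p : ℝ × ℝ => circleMap c p.1 p.2 := by
    unfold circleMap
    fun_prop
  have hmaps : MapsTo (fun p : ℝ × ℝ => circleMap c p.1 p.2)
      (Icc (0:ℝ) R ×ˢ Icc (-π) π) (closedBall c R) := by
    rintro ⟨r, θ⟩ ⟨hr, -⟩
    simp only [mem_closedBall, circleMap, dist_eq_norm]
    rw [add_comm, add_sub_cancel_right]
    rw [norm_mul]
    simp only [Complex.norm_real, Real.norm_eq_abs]
    rw [_root_.abs_of_nonneg hr.1]
    calc r * ‖Complex.exp (θ * I)‖ = r := by rw [Complex.norm_exp_ofReal_mul_I, mul_one]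
      _ ≤ R := hr.2
  have hQcont : ContinuousOn Q (Icc (0:ℝ) R ×ˢ Icc (-π) π) :=
    (continuous_fst.continuousOn).mul ((hcont.comp hφ.continuousOn hmaps).norm)
  have hQint : IntegrableOn Q S := by
    refine (hQcont.integrableOn_compact (isCompact_Icc.prod isCompact_Icc)).mono_set ?_
    exact Set.prod_mono Ioo_subset_Icc_self Ioo_subset_Icc_self
  -- polar coordinates
  have key := Complex.integral_comp_polarCoord_symm (fun w => G (c + w))
  have hrhs : (∫ p, G (c + p)) = ∫ z in ball c R, ‖f z‖ := by
    rw [integral_add_left_eq_self (fun w => G w) c]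
    rw [hG, MeasureTheory.integral_indicator measurableSet_ball]
  have hlhs : (∫ p in polarCoord.target, p.1 • G (c + Complex.polarCoord.symm p))
      = ∫ p in S, Q p := by
    have : ∀ p ∈ polarCoord.target, p.1 • G (c + Complex.polarCoord.symm p)
        = S.indicator Q p := by
      rintro ⟨r, θ⟩ ⟨hr, hθ⟩
      simp only [mem_Ioi] at hr
      have habs : ‖(Complex.polarCoord.symm (r, θ) : ℂ)‖ = r := by
        rw [Complex.norm_polarCoord_symm, _root_.abs_of_pos hr]
      have hcirc : c + Complex.polarCoord.symm (r, θ) = circleMap c r θ := by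
        rw [Complex.polarCoord_symm_apply, circleMap, Complex.exp_mul_I]
        push_cast
        ring
      by_cases hrR : r < R
      · have hmem : c + Complex.polarCoord.symm (r, θ) ∈ ball c R := by
          simp only [mem_ball, dist_eq_norm, add_sub_cancel_left]
          rwa [habs]
        have hmemS : ((r, θ) : ℝ × ℝ) ∈ S := ⟨⟨hr, hrR⟩, hθ⟩
        rw [hG, indicator_of_mem hmem, indicator_of_mem hmemS, hcirc]
        simp [Q, smul_eq_mul]
      · have hmem : c + Complex.polarCoord.symm (r, θ) ∉ ball c R := by
          simp only [mem_ball, dist_eq_norm, add_sub_cancel_left]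
          rw [habs]; exact fun hh => hrR hh
        have hmemS : ((r, θ) : ℝ × ℝ) ∉ S := fun hs => hrR hs.1.2
        rw [hG, indicator_of_notMem hmem, indicator_of_notMem hmemS, smul_zero]
    rw [setIntegral_congr_fun (polarCoord.open_target.measurableSet) this,
      setIntegral_indicator (by measurability : MeasurableSet S)]
    congr 1
    rw [Set.inter_eq_self_of_subset_right]
    show S ⊆ Ioi (0:ℝ) ×ˢ Ioo (-π) π
    exact Set.prod_mono Ioo_subset_Ioi_self (subset_rfl)
  -- Fubini
  have hSprod : (∫ p in S, Q p) = ∫ r in Ioo (0:ℝ) R, ∫ θ in Ioo (-π) π, Q (r, θ) := by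
    rw [hSdef]
    rw [MeasureTheory.Measure.volume_eq_prod] at hQint ⊢
    exact setIntegral_prod Q hQint
  have hinner : ∀ r ∈ Ioo (0:ℝ) R, ‖f c‖ * (2*π) * r ≤ ∫ θ in Ioo (-π) π, Q (r, θ) := by
    intro r hr
    have hper : Function.Periodic (fun θ => ‖f (circleMap c r θ)‖) (2*π) := fun θ => by
      simp [periodic_circleMap c r θ]
    have h1 : (∫ θ in Ioo (-π) π, Q (r, θ)) = r * ∫ θ in Ioo (-π) π, ‖f (circleMap c r θ)‖ := by
      simp only [hQdef]
      exact MeasureTheory.integral_const_mul r _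
    have h2 : (∫ θ in Ioo (-π) π, ‖f (circleMap c r θ)‖)
        = ∫ θ in (0:ℝ)..(2*π), ‖f (circleMap c r θ)‖ := by
      rw [← MeasureTheory.integral_Ioc_eq_integral_Ioo,
        ← intervalIntegral.integral_of_le (by linarith [Real.pi_pos] : (-π:ℝ) ≤ π)]
      have := hper.intervalIntegral_add_eq (-π) 0
      simp only [zero_add] at this
      have h2π : (-π + 2*π : ℝ) = π := by ring
      rw [h2π] at this
      exact this
    have h3 := circle_mean f hr.1 (hd.mono (closedBall_subset_closedBall hr.2.le))
    rw [h1, h2]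
    calc ‖f c‖ * (2*π) * r = r * (‖f c‖ * (2*π)) := by ring
      _ ≤ r * ∫ θ in (0:ℝ)..(2*π), ‖f (circleMap c r θ)‖ := by
          exact mul_le_mul_of_nonneg_left h3 hr.1.le
  have hQint' : Integrable Q ((volume.restrict (Ioo (0:ℝ) R)).prod (volume.restrict (Ioo (-π) π))) := by
    rwa [Measure.prod_restrict, ← MeasureTheory.Measure.volume_eq_prod]
  have hmono : (∫ r in Ioo (0:ℝ) R, ‖f c‖ * (2*π) * r)
      ≤ ∫ r in Ioo (0:ℝ) R, ∫ θ in Ioo (-π) π, Q (r, θ) := by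
    refine setIntegral_mono_on ?_ ?_ measurableSet_Ioo (fun r hr => hinner r hr)
    · exact (continuous_const.mul continuous_id).integrableOn_Icc.mono_set Ioo_subset_Icc_self
    · exact hQint'.integral_prod_left
  have hval : (∫ r in Ioo (0:ℝ) R, ‖f c‖ * (2*π) * r) = ‖f c‖ * (π * R^2) := by
    rw [MeasureTheory.integral_const_mul]
    have : (∫ r in Ioo (0:ℝ) R, r) = R^2/2 := by
      rw [← MeasureTheory.integral_Ioc_eq_integral_Ioo,
        ← intervalIntegral.integral_of_le hR.le, integral_id]
      ring
    rw [this]; ring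
  calc ‖f c‖ * (π * R ^ 2) = ∫ r in Ioo (0:ℝ) R, ‖f c‖ * (2*π) * r := hval.symm
    _ ≤ ∫ r in Ioo (0:ℝ) R, ∫ θ in Ioo (-π) π, Q (r, θ) := hmono
    _ = ∫ p in S, Q p := hSprod.symm
    _ = ∫ p in polarCoord.target, p.1 • G (c + Complex.polarCoord.symm p) := hlhs.symm
    _ = ∫ p, G (c + p) := key
    _ = ∫ z in ball c R, ‖f z‖ := hrhs

lemma isOpen_Dstar : IsOpen Dstar := by
  have : Dstar = ((fun z : ℂ => ‖z‖) ⁻¹' Ioi 0) ∩ ((fun z : ℂ => ‖z‖) ⁻¹' Iio 1) := by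
    ext z; simp [Dstar, and_comm]
  rw [this]
  exact (isOpen_Ioi.preimage continuous_norm).inter
    (isOpen_Iio.preimage continuous_norm)

-- tail smallness
lemma tail_small (g : ℂ → ℂ) (hg : DifferentiableOn ℂ g Dstar)
    (hL : (∫⁻ z in Dstar, ENNReal.ofReal (‖g z‖ ^ 2)) < ⊤) {ε : ℝ≥0∞} (hε : ε ≠ 0) :
    ∃ δ > (0:ℝ), (∫⁻ z in ball (0:ℂ) δ ∩ Dstar, ENNReal.ofReal (‖g z‖ ^ 2)) < ε := by
  set q : ℂ → ℝ≥0∞ := fun z => ENNReal.ofReal (‖g z‖ ^ 2) with hq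
  set μ : Measure ℂ := (volume.restrict Dstar).withDensity q with hμ
  have hμs : ∀ s : Set ℂ, MeasurableSet s → μ s = ∫⁻ z in s ∩ Dstar, q z := by
    intro s hs
    rw [hμ, withDensity_apply _ hs, Measure.restrict_restrict hs]
  have hμfin : μ (ball (0:ℂ) 1) ≠ ⊤ := by
    rw [hμs _ measurableSet_ball]
    refine ne_top_of_le_ne_top hL.ne ?_
    exact lintegral_mono_set inter_subset_right
  set s : ℕ → Set ℂ := fun n => ball (0:ℂ) (1/(n+1)) with hs
  have hanti : Antitone s := by
    intro m n hmn
    apply ball_subset_ball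
    have : (0:ℝ) < m + 1 := by positivity
    gcongr
  have hiInter : (⋂ n, s n) ⊆ {(0:ℂ)} := by
    intro z hz
    simp only [mem_iInter, hs, mem_ball, dist_zero_right] at hz
    simp only [mem_singleton_iff]
    by_contra hz0
    have hpos : 0 < ‖z‖ := norm_pos_iff.mpr hz0
    obtain ⟨n, hn⟩ := exists_nat_one_div_lt hpos
    exact absurd (hz n) (by push_cast; linarith [hn])
  have hμ0 : μ (⋂ n, s n) = 0 := by
    refine measure_mono_null hiInter ?_
    rw [hμs _ (measurableSet_singleton 0)]
    have : ({(0:ℂ)} ∩ Dstar) = ∅ := by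
      ext z; simp [Dstar]
    rw [this]; simp
  have htend : Tendsto (μ ∘ s) atTop (𝓝 0) := by
    rw [← hμ0]
    refine tendsto_measure_iInter_atTop
      (fun n => (measurableSet_ball).nullMeasurableSet) hanti ⟨0, ?_⟩
    refine ne_top_of_le_ne_top hμfin (measure_mono ?_)
    apply ball_subset_ball; norm_num
  have := (htend.eventually_lt_const (lt_of_le_of_ne (zero_le : (0:ℝ≥0∞) ≤ ε) (Ne.symm hε))).exists
  obtain ⟨n, hn⟩ := this
  refine ⟨1/(n+1), by positivity, ?_⟩
  rw [← hμs _ measurableSet_ball]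
  exact hn

set_option maxHeartbeats 1000000 in
lemma littleo_key (g : ℂ → ℂ) (hg : DifferentiableOn ℂ g Dstar)
    (hL : (∫⁻ z in Dstar, ENNReal.ofReal (‖g z‖ ^ 2)) < ⊤) :
    g =o[𝓝[≠] (0:ℂ)] fun z => z⁻¹ := by
  rw [Asymptotics.isLittleO_iff]
  intro ε hε
  have hεne : (ENNReal.ofReal (ε/2)) ^ 2 ≠ 0 :=
    pow_ne_zero _ (by simp [ENNReal.ofReal_eq_zero]; linarith)
  obtain ⟨δ, hδ, htail⟩ := tail_small g hg hL hεne
  set δ' : ℝ := min (2*δ/3) (1/2) with hδ'def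
  have hδ' : 0 < δ' := lt_min (by linarith) (by norm_num)
  have hball : ball (0:ℂ) δ' ∈ 𝓝 (0:ℂ) := ball_mem_nhds _ hδ'
  filter_upwards [eventually_nhdsWithin_of_eventually_nhds
    (eventually_of_mem hball (fun z hz => hz)), self_mem_nhdsWithin] with z hz hz0
  simp only [mem_ball, dist_zero_right] at hz
  have hz0' : z ≠ 0 := hz0
  set a : ℝ := ‖z‖ with ha
  have hapos : 0 < a := norm_pos_iff.mpr hz0'
  have ha12 : a < 1/2 := lt_of_lt_of_le hz (min_le_right _ _)
  have haδ : a < 2*δ/3 := lt_of_lt_of_le hz (min_le_left _ _)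
  set R : ℝ := a/2 with hR
  have hRpos : 0 < R := by positivity
  have hsub : closedBall z R ⊆ Dstar := by
    intro w hw
    simp only [mem_closedBall, dist_eq_norm] at hw
    have h1 : a - R ≤ ‖w‖ := by
      have := norm_sub_norm_le z w
      rw [norm_sub_rev] at this
      linarith [this]
    have h2 : ‖w‖ ≤ a + R := by
      have := norm_le_norm_add_norm_sub' w z  -- ‖w‖ ≤ ‖z‖ + ‖w - z‖
      linarith [this]
    constructor
    · show (0:ℝ) < ‖w‖
      linarith
    · show ‖w‖ < 1
      have : a + R = 3*a/2 := by rw [hR]; ring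
      linarith
  have hsubB : ball z R ⊆ ball (0:ℂ) δ ∩ Dstar := by
    intro w hw
    refine ⟨?_, hsub (ball_subset_closedBall hw)⟩
    simp only [mem_ball, dist_eq_norm] at hw ⊢
    rw [sub_zero]
    have := norm_le_norm_add_norm_sub' w z
    have h3 : 3*a/2 < δ := by linarith
    linarith [this, hw]
  have hdball : DifferentiableOn ℂ g (closedBall z R) := hg.mono hsub
  have h1 : ‖g z‖ * (π * R ^ 2) ≤ ∫ w in ball z R, ‖g w‖ := area_mean g hRpos hdball
  have hi : IntegrableOn (fun w => ‖g w‖) (ball z R) :=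
    ((hdball.continuousOn.norm).integrableOn_compact (isCompact_closedBall _ _)).mono_set
      ball_subset_closedBall
  have h2 : ENNReal.ofReal (∫ w in ball z R, ‖g w‖)
      = ∫⁻ w in ball z R, ENNReal.ofReal ‖g w‖ :=
    ofReal_integral_eq_lintegral_ofReal hi (Filter.Eventually.of_forall fun w => norm_nonneg _)
  have hmeas : AEMeasurable (fun w => ENNReal.ofReal ‖g w‖) (volume.restrict (ball z R)) :=
    (((hg.continuousOn.mono (ball_subset_closedBall.trans hsub)).norm).aemeasurable
      measurableSet_ball).ennreal_ofReal
  have hCS := ENNReal.lintegral_mul_le_Lp_mul_Lq (volume.restrict (ball z R))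
    Real.HolderConjugate.two_two hmeas aemeasurable_const
    (g := fun _ => (1:ℝ≥0∞))
  simp only [mul_one, Pi.mul_apply, ENNReal.one_rpow, lintegral_const, one_mul,
    Measure.restrict_apply_univ] at hCS
  -- hCS : ∫⁻ ofReal ‖g‖ ≤ (∫⁻ (ofReal ‖g‖)^(2:ℝ))^(1/2) * (volume (ball z R))^(1/2)
  have hsq : (∫⁻ w in ball z R, (ENNReal.ofReal ‖g w‖) ^ (2:ℝ))
      = ∫⁻ w in ball z R, ENNReal.ofReal (‖g w‖ ^ 2) := by
    refine lintegral_congr fun w => ?_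
    rw [ENNReal.ofReal_rpow_of_nonneg (norm_nonneg _) (by norm_num : (0:ℝ) ≤ 2)]
    norm_num
  have htail' : (∫⁻ w in ball z R, ENNReal.ofReal (‖g w‖ ^ 2))
      ≤ (ENNReal.ofReal (ε/2)) ^ 2 :=
    le_of_lt (lt_of_le_of_lt (lintegral_mono_set hsubB) htail)
  have hvol : volume (ball z R) = ENNReal.ofReal (π * R ^ 2) := by
    rw [Complex.volume_ball, ENNReal.ofReal_mul Real.pi_pos.le, ← ENNReal.ofReal_pow hRpos.le]
    rw [mul_comm]
    congr 1
    rw [← ENNReal.ofReal_coe_nnreal]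
    norm_num
  have chain : ENNReal.ofReal (‖g z‖ * (π * R ^ 2))
      ≤ ENNReal.ofReal ((ε/2) * (π * R ^ 2) ^ (1/2 : ℝ)) := by
    calc ENNReal.ofReal (‖g z‖ * (π * R ^ 2))
        ≤ ENNReal.ofReal (∫ w in ball z R, ‖g w‖) := ENNReal.ofReal_le_ofReal h1
      _ = ∫⁻ w in ball z R, ENNReal.ofReal ‖g w‖ := h2
      _ ≤ (∫⁻ w in ball z R, (ENNReal.ofReal ‖g w‖) ^ (2:ℝ)) ^ (1/2:ℝ)
          * (volume (ball z R)) ^ (1/2:ℝ) := hCS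
      _ ≤ ((ENNReal.ofReal (ε/2)) ^ 2) ^ (1/2:ℝ)
          * (ENNReal.ofReal (π * R ^ 2)) ^ (1/2:ℝ) := by
          rw [hsq, hvol]
          exact mul_le_mul_left (ENNReal.rpow_le_rpow htail' (by norm_num)) _
      _ = ENNReal.ofReal (ε/2) * ENNReal.ofReal ((π * R ^ 2) ^ (1/2:ℝ)) := by
          rw [← ENNReal.rpow_natCast (ENNReal.ofReal (ε/2)) 2, ← ENNReal.rpow_mul,
            ENNReal.ofReal_rpow_of_nonneg (by positivity : (0:ℝ) ≤ π * R ^ 2) (by norm_num)]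
          norm_num
      _ = ENNReal.ofReal ((ε/2) * (π * R ^ 2) ^ (1/2:ℝ)) := by
          rw [← ENNReal.ofReal_mul (by linarith)]
  have hreal : ‖g z‖ * (π * R ^ 2) ≤ (ε/2) * (π * R ^ 2) ^ (1/2:ℝ) := by
    rw [ENNReal.ofReal_le_ofReal_iff (by positivity)] at chain
    exact chain
  -- final algebra
  have hs : (π * R ^ 2) ^ (1/2:ℝ) = Real.sqrt π * R := by
    rw [← Real.sqrt_eq_rpow, Real.sqrt_mul Real.pi_pos.le, Real.sqrt_sq hRpos.le]
  rw [hs] at hreal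
  set s : ℝ := Real.sqrt π with hsdef
  have hs2 : s ^ 2 = π := Real.sq_sqrt Real.pi_pos.le
  have hsle : s ≤ π := by nlinarith [Real.pi_gt_three, Real.sqrt_nonneg π]
  have hgza : ‖g z‖ * a * π ≤ ε * π := by
    have e1 : ‖g z‖ * (π * R ^ 2) = (‖g z‖ * a * π) * (a/4) := by rw [hR]; ring
    have e2 : ε/2 * (s * R) = (ε * s) * (a/4) := by rw [hR]; ring
    rw [e1, e2] at hreal
    have h4 : (0:ℝ) < a/4 := div_pos hapos (by norm_num)
    have key : ‖g z‖ * a * π ≤ ε * s := le_of_mul_le_mul_right hreal h4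
    calc ‖g z‖ * a * π ≤ ε * s := key
      _ ≤ ε * π := by nlinarith [hε]
  have hfinal : ‖g z‖ * a ≤ ε :=
    le_of_mul_le_mul_right hgza Real.pi_pos
  have hrw : ε * ‖z⁻¹‖ = ε / a := by rw [norm_inv, ← ha, div_eq_mul_inv]
  rw [hrw, le_div_iff₀ hapos]
  exact hfinal

theorem weighted_bergman_punctured_disc (ℓ : ℤ) (h : ℂ → ℂ)
    (hh : DifferentiableOn ℂ h Dstar)
    (hhL2 : (∫⁻ z in Dstar, ENNReal.ofReal (‖z‖ ^ (2 * ℓ) * ‖h z‖ ^ 2)) < ⊤) :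
    ∃ f : ℂ → ℂ,
      DifferentiableOn ℂ f (Metric.ball (0 : ℂ) 1) ∧
      (∫⁻ z in Metric.ball (0 : ℂ) 1, ENNReal.ofReal (‖f z‖ ^ 2)) < ⊤ ∧
      ∀ z ∈ Dstar, h z = z ^ (-ℓ) * f z := by
  classical
  set g : ℂ → ℂ := fun z => if z = 0 then 0 else z ^ ℓ * h z with hgdef
  have hne : ∀ z ∈ Dstar, z ≠ 0 := by
    intro z hz
    simpa using (norm_pos_iff.mp hz.1)
  have hgD : ∀ z ∈ Dstar, g z = z ^ ℓ * h z := fun z hz => if_neg (hne z hz)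
  have hgdiff : DifferentiableOn ℂ g Dstar := by
    refine DifferentiableOn.congr (f := fun z => z ^ ℓ * h z) ?_ hgD
    intro z hz
    exact ((differentiableAt_zpow.mpr (Or.inl (hne z hz))).differentiableWithinAt).mul (hh z hz)
  have hnorm : ∀ z ∈ Dstar,
      ENNReal.ofReal (‖g z‖ ^ 2) = ENNReal.ofReal (‖z‖ ^ (2 * ℓ) * ‖h z‖ ^ 2) := by
    intro z hz
    congr 1
    rw [hgD z hz, norm_mul, norm_zpow, mul_pow]
    congr 1
    rw [← zpow_natCast (‖z‖ ^ ℓ) 2, ← zpow_mul]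
    congr 1
    push_cast
    ring
  have hL : (∫⁻ z in Dstar, ENNReal.ofReal (‖g z‖ ^ 2)) < ⊤ := by
    rwa [setLIntegral_congr_fun isOpen_Dstar.measurableSet
      hnorm]
  have ho := littleo_key g hgdiff hL
  have hmem : Dstar ∈ 𝓝[≠] (0:ℂ) := by
    rw [mem_nhdsWithin]
    refine ⟨ball 0 1, isOpen_ball, mem_ball_self one_pos, ?_⟩
    rintro z ⟨hz1, hz2⟩
    simp only [mem_ball, dist_zero_right] at hz1
    refine ⟨norm_pos_iff.mpr hz2, ?_⟩
    exact hz1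
  have hg0 : g 0 = 0 := if_pos rfl
  have ho' : (fun z => g z - g 0) =o[𝓝[≠] (0:ℂ)] fun z => (z - 0)⁻¹ := by
    simpa [hg0] using ho
  have hdiff := Complex.differentiableOn_update_limUnder_insert_of_isLittleO hmem hgdiff ho'
  have hins : insert (0:ℂ) Dstar = ball (0:ℂ) 1 := by
    ext z
    simp only [mem_insert_iff, mem_ball, dist_zero_right, Dstar, mem_setOf_eq,
      norm_pos_iff]
    constructor
    · rintro (rfl | ⟨h1, h2⟩)
      · simp
      · exact h2
    · intro hz
      rcases eq_or_ne z 0 with rfl | hz0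
      · exact Or.inl rfl
      · exact Or.inr ⟨hz0, hz⟩
  rw [hins] at hdiff
  set f : ℂ → ℂ := Function.update g 0 (limUnder (𝓝[≠] (0:ℂ)) g) with hfdef
  have hfD : ∀ z ∈ Dstar, f z = g z := fun z hz => Function.update_of_ne (hne z hz) _ _
  refine ⟨f, hdiff, ?_, ?_⟩
  · have hae : (ball (0:ℂ) 1 : Set ℂ) =ᵐ[volume] Dstar := by
      rw [Filter.eventuallyEq_set]
      have hnull : volume ({(0:ℂ)} : Set ℂ) = 0 := measure_singleton 0
      filter_upwards [measure_eq_zero_iff_ae_notMem.mp hnull] with z hz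
      simp only [mem_singleton_iff] at hz
      simp only [mem_ball, dist_zero_right, Dstar, mem_setOf_eq,
        norm_pos_iff]
      exact ⟨fun h1 => ⟨hz, h1⟩, fun h1 => h1.2⟩
    rw [setLIntegral_congr hae,
      setLIntegral_congr_fun isOpen_Dstar.measurableSet
        (fun z hz => by rw [hfD z hz])]
    exact hL
  · intro z hz
    rw [hfD z hz, hgD z hz, zpow_neg, ← mul_assoc,
      inv_mul_cancel₀ (zpow_ne_zero ℓ (hne z hz)), one_mul]
end
end

section
/- Let ℓ be an integer. The linear span of the monomials z ↦ z₁^{ν₁} · conj(z₁)^{ν₂} · z₂^{ν₃} · conj(z₂)^{ν₄}, where ν₁, ν₂ range over non-negative integers and ν₃, ν₄ over integers with ν₃ + ν₄ ≥ −ℓ, is dense in the weighted space L²(P, ℓΦ): for every measurable f : ℂ² → ℂ with ∫_P |z₂|^{2ℓ} |f|² dV < ∞ and every ε > 0 there is a finite linear combination p of such monomials with ∫_P |z₂|^{2ℓ} |f − p|² dV < ε. -/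
open MeasureTheory Complex

noncomputable section

/-- The Laurent-type monomials `z₁^ν₁ conj(z₁)^ν₂ z₂^ν₃ conj(z₂)^ν₄` with
`ν₁, ν₂ ≥ 0` and `ν₃ + ν₄ ≥ -ℓ`. -/
def laurentMonomials (ℓ : ℤ) : Set (ℂ × ℂ → ℂ) :=
  {m | ∃ (ν₁ ν₂ : ℕ) (ν₃ ν₄ : ℤ), -ℓ ≤ ν₃ + ν₄ ∧
    m = fun z : ℂ × ℂ =>
      z.1 ^ ν₁ * (starRingEnd ℂ) z.1 ^ ν₂ * z.2 ^ ν₃ * (starRingEnd ℂ) z.2 ^ ν₄}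

/-- Polynomial monomials in `z₁, conj z₁, z₂, conj z₂` with natural exponents. -/
def polyMonomials : Set (ℂ × ℂ → ℂ) :=
  {m | ∃ (a b c d : ℕ),
    m = fun z : ℂ × ℂ =>
      z.1 ^ a * (starRingEnd ℂ) z.1 ^ b * z.2 ^ c * (starRingEnd ℂ) z.2 ^ d}

lemma polySpan_continuous {Q : ℂ × ℂ → ℂ} (hQ : Q ∈ Submodule.span ℂ polyMonomials) :
    Continuous Q := by
  induction hQ using Submodule.span_induction with
  | mem m hm =>
    obtain ⟨a, b, c, d, rfl⟩ := hm
    exact (((continuous_fst.pow a).mul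
      ((Complex.continuous_conj.comp continuous_fst).pow b)).mul (continuous_snd.pow c)).mul
      ((Complex.continuous_conj.comp continuous_snd).pow d)
  | zero => exact continuous_const
  | add x y hx hy hx' hy' => exact hx'.add hy'
  | smul c x hx hx' => exact continuous_const.mul hx'

lemma polySpan_mul {Q R : ℂ × ℂ → ℂ} (hQ : Q ∈ Submodule.span ℂ polyMonomials)
    (hR : R ∈ Submodule.span ℂ polyMonomials) :
    Q * R ∈ Submodule.span ℂ polyMonomials := by
  induction hQ using Submodule.span_induction with
  | mem m hm =>
    induction hR using Submodule.span_induction with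
    | mem n hn =>
      obtain ⟨a, b, c, d, rfl⟩ := hm
      obtain ⟨a', b', c', d', rfl⟩ := hn
      refine Submodule.subset_span ⟨a + a', b + b', c + c', d + d', ?_⟩
      funext z
      simp only [Pi.mul_apply, pow_add]
      ring
    | zero => simpa using (Submodule.span ℂ polyMonomials).zero_mem
    | add x y hx hy hx' hy' => ?_
    | smul c x hx hx' => ?_
    · have : (m : ℂ × ℂ → ℂ) * (x + y) = m * x + m * y := by funext z; simp [Pi.mul_apply]; ring
      rw [this]; exact add_mem hx' hy'
    · have : (m : ℂ × ℂ → ℂ) * (c • x) = c • (m * x) := by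
        funext z; simp [Pi.mul_apply]; ring
      rw [this]; exact Submodule.smul_mem _ _ hx'
  | zero => simpa using (Submodule.span ℂ polyMonomials).zero_mem
  | add x y hx hy hx' hy' =>
    have : (x + y) * R = x * R + y * R := by funext z; simp [Pi.mul_apply]; ring
    rw [this]; exact add_mem hx' hy'
  | smul c x hx hx' =>
    have : (c • x) * R = c • (x * R) := by funext z; simp [Pi.mul_apply]; ring
    rw [this]; exact Submodule.smul_mem _ _ hx'

lemma polySpan_star {Q : ℂ × ℂ → ℂ} (hQ : Q ∈ Submodule.span ℂ polyMonomials) :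
    (fun z => (starRingEnd ℂ) (Q z)) ∈ Submodule.span ℂ polyMonomials := by
  induction hQ using Submodule.span_induction with
  | mem m hm =>
    obtain ⟨a, b, c, d, rfl⟩ := hm
    refine Submodule.subset_span ⟨b, a, d, c, ?_⟩
    funext z
    simp only [map_mul, map_pow, Complex.conj_conj]
    ring
  | zero =>
    have : (fun z : ℂ × ℂ => (starRingEnd ℂ) ((0 : ℂ × ℂ → ℂ) z)) = (0 : ℂ × ℂ → ℂ) := by
      funext z; simp
    rw [this]; exact Submodule.zero_mem _
  | add x y hx hy hx' hy' =>
    have : (fun z => (starRingEnd ℂ) ((x + y) z)) =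
        (fun z => (starRingEnd ℂ) (x z)) + fun z => (starRingEnd ℂ) (y z) := by
      funext z; simp
    rw [this]; exact add_mem hx' hy'
  | smul c x hx hx' =>
    have : (fun z => (starRingEnd ℂ) ((c • x) z)) =
        (starRingEnd ℂ c) • fun z => (starRingEnd ℂ) (x z) := by
      funext z; simp
    rw [this]; exact Submodule.smul_mem _ _ hx'

/-- Dividing an element of the polynomial span by `z₂^ℓ` yields, on the set where `z₂ ≠ 0`,
an element of the span of the Laurent monomials. -/
lemma exists_laurent_of_polySpan (ℓ : ℤ) {Q : ℂ × ℂ → ℂ}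
    (hQ : Q ∈ Submodule.span ℂ polyMonomials) :
    ∃ p ∈ Submodule.span ℂ (laurentMonomials ℓ),
      ∀ z : ℂ × ℂ, z.2 ≠ 0 → p z = z.2 ^ (-ℓ) * Q z := by
  induction hQ using Submodule.span_induction with
  | mem m hm =>
    obtain ⟨a, b, c, d, rfl⟩ := hm
    refine ⟨fun z => z.1 ^ a * (starRingEnd ℂ) z.1 ^ b * z.2 ^ ((c : ℤ) - ℓ) *
      (starRingEnd ℂ) z.2 ^ (d : ℤ), ?_, ?_⟩
    · exact Submodule.subset_span ⟨a, b, (c : ℤ) - ℓ, (d : ℤ), by omega, rfl⟩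
    · intro z hz
      simp only [sub_eq_add_neg, zpow_add₀ hz, zpow_natCast]
      ring
  | zero => exact ⟨0, Submodule.zero_mem _, by simp⟩
  | add x y hx hy hx' hy' =>
    obtain ⟨p, hp, hpe⟩ := hx'
    obtain ⟨q, hq, hqe⟩ := hy'
    exact ⟨p + q, add_mem hp hq, fun z hz => by
      simp [hpe z hz, hqe z hz]; ring⟩
  | smul c x hx hx' =>
    obtain ⟨p, hp, hpe⟩ := hx'
    exact ⟨c • p, Submodule.smul_mem _ _ hp, fun z hz => by
      simp [hpe z hz]; ring⟩

def Kset : Set (ℂ × ℂ) := (Metric.closedBall (0:ℂ) 1) ×ˢ (Metric.closedBall (0:ℂ) 1)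

lemma Kset_compact : IsCompact Kset :=
  (isCompact_closedBall _ _).prod (isCompact_closedBall _ _)

/-- Stone–Weierstrass: uniform approximation on `Kset` by elements of the polynomial span. -/
lemma exists_poly_approx (g : ℂ × ℂ → ℂ) (hg : Continuous g) {c : ℝ} (hc : 0 < c) :
    ∃ Q ∈ Submodule.span ℂ polyMonomials, ∀ x ∈ Kset, ‖g x - Q x‖ ≤ c := by
  haveI : CompactSpace Kset := isCompact_iff_compactSpace.mp Kset_compact
  set q1 : C(Kset, ℂ) := ⟨fun x => (x : ℂ × ℂ).1, by fun_prop⟩ with hq1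
  set q2 : C(Kset, ℂ) := ⟨fun x => (x : ℂ × ℂ).2, by fun_prop⟩ with hq2
  set A : StarSubalgebra ℂ C(Kset, ℂ) := StarAlgebra.adjoin ℂ {q1, q2} with hA
  have hsep : A.SeparatesPoints := by
    intro x y hxy
    have : (x : ℂ × ℂ).1 ≠ (y : ℂ × ℂ).1 ∨ (x : ℂ × ℂ).2 ≠ (y : ℂ × ℂ).2 := by
      by_contra h
      push_neg at h
      exact hxy (Subtype.ext (Prod.ext h.1 h.2))
    rcases this with h | h
    · exact ⟨_, ⟨q1, StarAlgebra.subset_adjoin ℂ _ (by simp), rfl⟩, h⟩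
    · exact ⟨_, ⟨q2, StarAlgebra.subset_adjoin ℂ _ (by simp), rfl⟩, h⟩
  have hdense := ContinuousMap.starSubalgebra_topologicalClosure_eq_top_of_separatesPoints A hsep
  set gK : C(Kset, ℂ) := ⟨fun x => g x, hg.comp continuous_subtype_val⟩ with hgK
  have hmem : gK ∈ closure (A : Set C(Kset, ℂ)) := by
    have : gK ∈ A.topologicalClosure := hdense ▸ StarSubalgebra.mem_top
    exact this
  obtain ⟨h, hhA, hdist⟩ := Metric.mem_closure_iff.mp hmem c hc
  have key : ∀ u : C(Kset, ℂ), u ∈ A →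
      ∃ Q ∈ Submodule.span ℂ polyMonomials, ∀ x : Kset, u x = Q x := by
    intro u hu
    induction hu using StarAlgebra.adjoin_induction with
    | mem v hv =>
      rcases hv with hv | hv
      · exact ⟨fun z => z.1, Submodule.subset_span ⟨1, 0, 0, 0, by funext z; simp⟩,
          fun x => by simp [hv, hq1]⟩
      · refine ⟨fun z => z.2, Submodule.subset_span ⟨0, 0, 1, 0, by funext z; simp⟩,
          fun x => by simp [Set.mem_singleton_iff.mp hv, hq2]⟩
    | algebraMap r =>
      refine ⟨fun _ => r, ?_, fun x => rfl⟩
      have : (fun _ : ℂ × ℂ => r) = r • (fun _ : ℂ × ℂ => (1:ℂ)) := by funext z; simp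
      rw [this]
      exact Submodule.smul_mem _ _ (Submodule.subset_span ⟨0,0,0,0, by funext z; simp⟩)
    | add x y hx hy hx' hy' =>
      obtain ⟨Q1, hQ1, he1⟩ := hx'
      obtain ⟨Q2, hQ2, he2⟩ := hy'
      exact ⟨Q1 + Q2, add_mem hQ1 hQ2, fun x => by simp [he1 x, he2 x]⟩
    | mul x y hx hy hx' hy' =>
      obtain ⟨Q1, hQ1, he1⟩ := hx'
      obtain ⟨Q2, hQ2, he2⟩ := hy'
      exact ⟨Q1 * Q2, polySpan_mul hQ1 hQ2, fun x => by simp [he1 x, he2 x]⟩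
    | star x hx hx' =>
      obtain ⟨Q1, hQ1, he1⟩ := hx'
      exact ⟨fun z => (starRingEnd ℂ) (Q1 z), polySpan_star hQ1,
        fun x => by simp [he1 x]⟩
  obtain ⟨Q, hQ, hQe⟩ := key h hhA
  refine ⟨Q, hQ, fun x hx => ?_⟩
  have hd := ContinuousMap.dist_apply_le_dist (f := gK) (g := h) ⟨x, hx⟩
  rw [dist_eq_norm] at hd
  calc ‖g x - Q x‖ = ‖gK ⟨x, hx⟩ - h ⟨x, hx⟩‖ := by rw [hQe ⟨x, hx⟩]; rfl
  _ ≤ dist gK h := hd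
  _ ≤ c := hdist.le

lemma ptw_norm (ℓ : ℤ) (w v : ℂ) :
    ENNReal.ofReal (‖w‖ ^ (2 * ℓ) * ‖v‖ ^ 2)
      = (‖w ^ ℓ * v‖₊ : ENNReal) ^ (2:ℝ) := by
  have h1 : ‖w‖ ^ (2 * ℓ) * ‖v‖ ^ 2 = ‖w ^ ℓ * v‖ ^ 2 := by
    rw [norm_mul, mul_pow, norm_zpow, mul_comm 2 ℓ, zpow_mul]
    norm_num
  rw [h1, show ((2:ℝ)) = ((2:ℕ):ℝ) by norm_num, ENNReal.rpow_natCast,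
    ENNReal.ofReal_pow (norm_nonneg _), ofReal_norm, enorm_eq_nnnorm]

lemma eLpNorm_sq (μ : Measure (ℂ × ℂ)) (v : ℂ × ℂ → ℂ) :
    eLpNorm v 2 μ ^ (2:ℝ) = ∫⁻ z, (‖v z‖₊ : ENNReal) ^ (2:ℝ) ∂μ := by
  rw [eLpNorm_eq_lintegral_rpow_enorm_toReal (by norm_num) (by norm_num)]
  simp only [enorm_eq_nnnorm]
  rw [← ENNReal.rpow_mul]
  norm_num

lemma Pdom_eq : Pdom = (Metric.ball (0:ℂ) 1) ×ˢ (Metric.ball (0:ℂ) 1 \ {0}) := by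
  ext z
  simp [Pdom, Metric.mem_ball, dist_zero_right, and_comm]

lemma Pdom_open : IsOpen Pdom := by
  rw [Pdom_eq]
  exact Metric.isOpen_ball.prod (Metric.isOpen_ball.sdiff isClosed_singleton)

lemma Pdom_subset_Kset : Pdom ⊆ Kset := by
  rw [Pdom_eq]
  intro z hz
  exact ⟨Metric.ball_subset_closedBall hz.1, Metric.ball_subset_closedBall hz.2.1⟩

theorem monomials_dense_weighted_L2 (ℓ : ℤ) (f : ℂ × ℂ → ℂ) (hf : Measurable f)
    (hfL2 : (∫⁻ z in Pdom,
        ENNReal.ofReal (‖z.2‖ ^ (2 * ℓ) * ‖f z‖ ^ 2)) < ⊤) :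
    ∀ ε : ℝ, 0 < ε →
      ∃ p ∈ Submodule.span ℂ (laurentMonomials ℓ),
        (∫⁻ z in Pdom,
          ENNReal.ofReal (‖z.2‖ ^ (2 * ℓ) * ‖f z - p z‖ ^ 2))
          < ENNReal.ofReal ε := by
  intro ε hε
  set μ : Measure (ℂ × ℂ) := volume.restrict Pdom with hμ
  have hPmeas : MeasurableSet Pdom := Pdom_open.measurableSet
  have hPfin : (volume : Measure (ℂ × ℂ)) Pdom ≠ ⊤ := by
    refine ne_of_lt (lt_of_le_of_lt (measure_mono Pdom_subset_Kset) ?_)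
    exact Kset_compact.measure_lt_top
  haveI : IsFiniteMeasure μ := by
    constructor
    rw [hμ, Measure.restrict_apply_univ]
    exact hPfin.lt_top
  haveI : μ.WeaklyRegular := Measure.WeaklyRegular.restrict_of_measure_ne_top hPfin
  -- the unweighted function F
  set F : ℂ × ℂ → ℂ := fun z => z.2 ^ ℓ * f z with hF
  have hFmeas : Measurable F := (measurable_snd.pow_const ℓ).mul hf
  -- membership in L²
  have hne : ∀ z ∈ Pdom, z.2 ≠ 0 := by
    intro z hz
    simpa using norm_pos_iff.mp hz.2.1
  have hint : ∀ (u : ℂ × ℂ → ℂ),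
      (∫⁻ z in Pdom, ENNReal.ofReal (‖z.2‖ ^ (2 * ℓ) * ‖u z‖ ^ 2))
        = ∫⁻ z, (‖z.2 ^ ℓ * u z‖₊ : ENNReal) ^ (2:ℝ) ∂μ := by
    intro u
    rw [hμ]
    refine setLIntegral_congr_fun hPmeas (fun z _ => ?_)
    exact ptw_norm ℓ z.2 (u z)
  have hF2 : MemLp F 2 μ := by
    refine ⟨hFmeas.aestronglyMeasurable, ?_⟩
    rw [eLpNorm_eq_lintegral_rpow_enorm_toReal (by norm_num) (by norm_num)]
    simp only [enorm_eq_nnnorm]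
    refine ENNReal.rpow_lt_top_of_nonneg (by norm_num) ?_
    have h2 : (∫⁻ z, (‖F z‖₊ : ENNReal) ^ ((2:ENNReal).toReal) ∂μ)
        = ∫⁻ z in Pdom, ENNReal.ofReal (‖z.2‖ ^ (2 * ℓ) * ‖f z‖ ^ 2) := by
      rw [show ((2:ENNReal)).toReal = (2:ℝ) from by norm_num]
      exact (hint f).symm
    rw [h2]
    exact hfL2.ne
  -- choice of constants
  set η : ℝ := Real.sqrt ε with hηdef
  have hη : 0 < η := Real.sqrt_pos.mpr hε
  -- bounded continuous approximation
  obtain ⟨g, hg, -⟩ := hF2.exists_boundedContinuous_eLpNorm_sub_le (p := 2) (by norm_num)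
    (ε := ENNReal.ofReal (η / 4)) (by simp [ENNReal.ofReal_eq_zero]; linarith)
  -- polynomial approximation of g
  set R : ENNReal := μ Set.univ ^ ((2:ENNReal).toReal)⁻¹ with hR
  have hRne : R ≠ ⊤ := by
    refine ENNReal.rpow_ne_top_of_nonneg (by norm_num) (measure_ne_top μ _)
  set c : ℝ := (η / 4) / (R.toReal + 1) with hc
  have hRpos : 0 < R.toReal + 1 := by positivity
  have hcpos : 0 < c := by
    apply div_pos (by linarith) hRpos
  obtain ⟨Q, hQspan, hQapprox⟩ := exists_poly_approx g g.continuous hcpos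
  -- bound eLpNorm (g - Q)
  have hgQ : eLpNorm (fun z => g z - Q z) 2 μ ≤ ENNReal.ofReal (η / 4) := by
    have hb : ∀ᵐ z ∂μ, ‖g z - Q z‖ ≤ c := by
      filter_upwards [ae_restrict_mem hPmeas] with z hz
      exact hQapprox z (Pdom_subset_Kset hz)
    refine le_trans (eLpNorm_le_of_ae_bound hb) ?_
    have hR1 : R ≤ ENNReal.ofReal (R.toReal + 1) := by
      calc R = ENNReal.ofReal R.toReal := (ENNReal.ofReal_toReal hRne).symm
        _ ≤ ENNReal.ofReal (R.toReal + 1) := ENNReal.ofReal_le_ofReal (by linarith)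
    calc R * ENNReal.ofReal c ≤ ENNReal.ofReal (R.toReal + 1) * ENNReal.ofReal c := by
          gcongr
      _ = ENNReal.ofReal ((R.toReal + 1) * c) := by
          rw [ENNReal.ofReal_mul (by positivity)]
      _ = ENNReal.ofReal (η / 4) := by
          congr 1
          rw [hc]
          field_simp
  -- total bound
  have hFQ : eLpNorm (fun z => F z - Q z) 2 μ < ENNReal.ofReal η := by
    have hsplit : (fun z => F z - Q z)
        = (fun z => F z - g z) + fun z => g z - Q z := by
      funext z; simp
    rw [hsplit]
    have hQcont : Continuous Q := polySpan_continuous hQspan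
    have h1 : AEStronglyMeasurable (fun z => F z - g z) μ :=
      (hFmeas.aestronglyMeasurable.sub g.continuous.aestronglyMeasurable)
    have h2 : AEStronglyMeasurable (fun z => g z - Q z) μ :=
      (g.continuous.sub hQcont).aestronglyMeasurable
    calc eLpNorm ((fun z => F z - g z) + fun z => g z - Q z) 2 μ
        ≤ eLpNorm (fun z => F z - g z) 2 μ + eLpNorm (fun z => g z - Q z) 2 μ :=
          eLpNorm_add_le h1 h2 (by norm_num)
      _ ≤ ENNReal.ofReal (η / 4) + ENNReal.ofReal (η / 4) := by
          refine add_le_add (le_trans (le_of_eq ?_) hg) hgQ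
          rfl
      _ = ENNReal.ofReal (η / 2) := by
          rw [← ENNReal.ofReal_add (by linarith) (by linarith)]
          congr 1; ring
      _ < ENNReal.ofReal η := by
          rw [ENNReal.ofReal_lt_ofReal_iff hη]
          linarith
  -- produce the Laurent span element
  obtain ⟨p, hpspan, hpe⟩ := exists_laurent_of_polySpan ℓ hQspan
  refine ⟨p, hpspan, ?_⟩
  have hrw : (∫⁻ z in Pdom, ENNReal.ofReal (‖z.2‖ ^ (2 * ℓ) * ‖f z - p z‖ ^ 2))
      = ∫⁻ z, (‖F z - Q z‖₊ : ENNReal) ^ (2:ℝ) ∂μ := by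
    rw [hint (fun z => f z - p z)]
    rw [hμ]
    refine setLIntegral_congr_fun hPmeas (fun z hz => ?_)
    have hz2 : z.2 ≠ 0 := hne z hz
    have : z.2 ^ ℓ * (f z - p z) = F z - Q z := by
      rw [mul_sub, hpe z hz2, hF]
      have : z.2 ^ ℓ * (z.2 ^ (-ℓ) * Q z) = Q z := by
        rw [← mul_assoc, ← zpow_add₀ hz2]
        simp
      rw [this]
    simp only [this]
  rw [hrw, ← eLpNorm_sq μ (fun z => F z - Q z)]
  have hlt : eLpNorm (fun z => F z - Q z) 2 μ ^ (2:ℝ)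
      < (ENNReal.ofReal η) ^ (2:ℝ) :=
    ENNReal.rpow_lt_rpow hFQ (by norm_num)
  refine lt_of_lt_of_le hlt (le_of_eq ?_)
  rw [ENNReal.ofReal_rpow_of_pos hη]
  congr 1
  rw [show ((2:ℝ)) = ((2:ℕ):ℝ) by norm_num, Real.rpow_natCast]
  exact Real.sq_sqrt hε.le
end
end

section
/- The function (w₁,w₂) ↦ 1/w₂ is square-integrable on the Hartogs triangle with ∫_H |w₂|^{−2} dV(w) = π², while its derivative in w₂ is not square-integrable: ∫_H |w₂|^{−4} dV(w) = ∞. Hence 1/w₂ belongs to the Bergman space L²(H) ∩ O(H) but not to the Sobolev space W¹(H). -/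
open MeasureTheory Complex ENNReal

noncomputable section

lemma isOpen_Hartogs : IsOpen Hartogs := by
  have h1 : IsOpen {w : ℂ × ℂ | ‖w.1‖ < ‖w.2‖} :=
    isOpen_lt (continuous_norm.comp continuous_fst)
      (continuous_norm.comp continuous_snd)
  have h2 : IsOpen {w : ℂ × ℂ | ‖w.2‖ < 1} :=
    isOpen_lt (continuous_norm.comp continuous_snd) continuous_const
  exact h1.inter h2

lemma measurableSet_Hartogs : MeasurableSet Hartogs := isOpen_Hartogs.measurableSet

lemma pi_ennreal : ((NNReal.pi : ℝ≥0∞)) = ENNReal.ofReal Real.pi := by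
  rw [← NNReal.coe_real_pi, ENNReal.ofReal_coe_nnreal]

/-- Fubini reduction: integrating a function of `w.2` over the Hartogs triangle. -/
lemma hartogs_lintegral (g : ℂ → ℝ≥0∞) (hg : Measurable g) :
    (∫⁻ w in Hartogs, g w.2) =
      ∫⁻ z in Metric.ball (0 : ℂ) 1,
        g z * (ENNReal.ofReal ‖z‖ ^ 2 * NNReal.pi) := by
  have hmeas : Measurable fun w : ℂ × ℂ => Hartogs.indicator (fun w => g w.2) w :=
    (hg.comp measurable_snd).indicator measurableSet_Hartogs
  rw [← lintegral_indicator measurableSet_Hartogs, Measure.volume_eq_prod,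
    lintegral_prod_symm' _ hmeas,
    ← lintegral_indicator (measurableSet_ball)]
  refine lintegral_congr fun z => ?_
  by_cases hz : ‖z‖ < 1
  · have hball : {x : ℂ | (x, z) ∈ Hartogs} = Metric.ball (0 : ℂ) ‖z‖ := by
      ext x
      simp [Hartogs, hz, Metric.mem_ball, Complex.dist_eq]
    have : (fun x : ℂ => Hartogs.indicator (fun w => g w.2) (x, z)) =
        (Metric.ball (0 : ℂ) ‖z‖).indicator fun _ => g z := by
      funext x
      by_cases hx : (x, z) ∈ Hartogs
      · rw [Set.indicator_of_mem hx, Set.indicator_of_mem (by rw [← hball]; exact hx)]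
      · rw [Set.indicator_of_notMem hx, Set.indicator_of_notMem (by rw [← hball]; exact hx)]
    rw [this, lintegral_indicator measurableSet_ball, setLIntegral_const,
      Complex.volume_ball,
      Set.indicator_of_mem (by simpa [Metric.mem_ball, Complex.dist_eq] using hz)]
  · have : (fun x : ℂ => Hartogs.indicator (fun w => g w.2) (x, z)) = fun _ => 0 := by
      funext x
      exact Set.indicator_of_notMem (fun h => hz h.2) _
    rw [this, lintegral_zero,
      Set.indicator_of_notMem (by simpa [Metric.mem_ball, Complex.dist_eq] using hz)]

lemma meas_zpow (k : ℤ) : Measurable fun x : ℝ => x ^ k := by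
  cases k with
  | ofNat n => simpa using measurable_id.pow_const n
  | negSucc n =>
      simp only [zpow_negSucc]; exact (measurable_id.pow_const (n + 1)).inv

lemma meas_aux (k : ℤ) : Measurable fun z : ℂ => ENNReal.ofReal (‖z‖ ^ k) :=
  ENNReal.measurable_ofReal.comp ((meas_zpow k).comp continuous_norm.measurable)

lemma ae_ne_zero : ∀ᵐ z : ℂ, z ≠ 0 := by
  refine ae_iff.2 ?_
  simp only [not_not]
  exact measure_singleton 0

/-- First integral: π². -/
lemma integral_neg_two :
    (∫⁻ w in Hartogs, ENNReal.ofReal (‖w.2‖ ^ (-2 : ℤ)))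
      = ENNReal.ofReal (Real.pi ^ 2) := by
  rw [hartogs_lintegral _ (meas_aux (-2))]
  have hae : (fun z : ℂ => ENNReal.ofReal (‖z‖ ^ (-2 : ℤ)) *
      (ENNReal.ofReal ‖z‖ ^ 2 * NNReal.pi))
      =ᵐ[volume.restrict (Metric.ball (0 : ℂ) 1)] fun _ => (NNReal.pi : ℝ≥0∞) := by
    filter_upwards [ae_restrict_of_ae ae_ne_zero] with z hz0
    have habs : (0:ℝ) < ‖z‖ := norm_pos_iff.2 hz0
    rw [← ENNReal.ofReal_pow (norm_nonneg z), ← mul_assoc,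
      ← ENNReal.ofReal_mul (by positivity)]
    have : ‖z‖ ^ (-2 : ℤ) * ‖z‖ ^ 2 = 1 := by
      rw [← zpow_natCast ‖z‖ 2, ← zpow_add₀ habs.ne']
      norm_num
    rw [this, ENNReal.ofReal_one, one_mul]
  rw [lintegral_congr_ae hae, setLIntegral_const, Complex.volume_ball, pi_ennreal]
  simp [← ENNReal.ofReal_mul Real.pi_pos.le, sq]

/-- The annuli. -/
def Ann (n : ℕ) : Set ℂ :=
  Metric.ball (0 : ℂ) ((1/2 : ℝ) ^ n) \ Metric.closedBall (0 : ℂ) ((1/2 : ℝ) ^ (n + 1))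

lemma ann_subset (n : ℕ) : Ann n ⊆ Metric.ball (0 : ℂ) 1 := by
  refine Set.diff_subset.trans (Metric.ball_subset_ball ?_)
  exact pow_le_one₀ (by norm_num) (by norm_num)

lemma ann_measurable (n : ℕ) : MeasurableSet (Ann n) :=
  measurableSet_ball.diff measurableSet_closedBall

lemma ann_disjoint : Pairwise (Function.onFun Disjoint Ann) := by
  have key : ∀ m n : ℕ, m < n → Disjoint (Ann m) (Ann n) := by
    intro m n hmn
    refine Set.disjoint_left.2 fun z hzm hzn => ?_
    have h1 : (1/2 : ℝ) ^ (m + 1) < ‖z‖ := by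
      have := hzm.2
      simpa [Metric.mem_closedBall, Complex.dist_eq, not_le] using this
    have h2 : ‖z‖ < (1/2 : ℝ) ^ n := by
      simpa [Metric.mem_ball, Complex.dist_eq] using hzn.1
    have : (1/2 : ℝ) ^ n ≤ (1/2:ℝ) ^ (m + 1) :=
      pow_le_pow_of_le_one (by norm_num) (by norm_num) hmn
    linarith
  intro m n hmn
  rcases lt_or_gt_of_ne hmn with h | h
  · exact key m n h
  · exact (key n m h).symm

lemma ann_volume (n : ℕ) :
    volume (Ann n) = ENNReal.ofReal (((1/2:ℝ) ^ n) ^ 2 * Real.pi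
      - ((1/2:ℝ) ^ (n+1)) ^ 2 * Real.pi) := by
  have hsub : Metric.closedBall (0:ℂ) ((1/2:ℝ) ^ (n+1)) ⊆ Metric.ball (0:ℂ) ((1/2:ℝ) ^ n) :=
    Metric.closedBall_subset_ball (by
      apply pow_lt_pow_right_of_lt_one₀ <;> norm_num)
  have hfin : volume (Metric.closedBall (0:ℂ) ((1/2:ℝ) ^ (n+1))) ≠ ⊤ :=
    measure_closedBall_lt_top.ne
  rw [Ann, measure_diff hsub measurableSet_closedBall.nullMeasurableSet hfin,
    Complex.volume_ball, Complex.volume_closedBall, pi_ennreal,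
    ← ENNReal.ofReal_pow (by positivity), ← ENNReal.ofReal_pow (by positivity),
    ← ENNReal.ofReal_mul (by positivity), ← ENNReal.ofReal_mul (by positivity),
    ← ENNReal.ofReal_sub _ (by positivity)]

lemma ann_term (n : ℕ) :
    ENNReal.ofReal (3 * Real.pi / 4) ≤ ∫⁻ z in Ann n, ENNReal.ofReal (‖z‖ ^ (-2 : ℤ)) := by
  have hconst : ∀ z ∈ Ann n,
      ENNReal.ofReal ((((1/2:ℝ) ^ n) ^ 2)⁻¹) ≤ ENNReal.ofReal (‖z‖ ^ (-2 : ℤ)) := by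
    intro z hz
    apply ENNReal.ofReal_le_ofReal
    have h1 : (0:ℝ) < (1/2:ℝ) ^ (n+1) := by positivity
    have h2 : (1/2 : ℝ) ^ (n + 1) < ‖z‖ := by
      simpa [Metric.mem_closedBall, Complex.dist_eq, not_le] using hz.2
    have h3 : ‖z‖ < (1/2 : ℝ) ^ n := by
      simpa [Metric.mem_ball, Complex.dist_eq] using hz.1
    have habs : (0:ℝ) < ‖z‖ := h1.trans h2
    have hzp : ‖z‖ ^ (-2 : ℤ) = (‖z‖ ^ 2)⁻¹ := by
      rw [← zpow_natCast ‖z‖ 2, ← zpow_neg]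
      norm_num
    rw [hzp]
    exact inv_anti₀ (by positivity) (pow_le_pow_left₀ habs.le h3.le 2)
  calc ENNReal.ofReal (3 * Real.pi / 4)
      ≤ ENNReal.ofReal ((((1/2:ℝ) ^ n) ^ 2)⁻¹) * volume (Ann n) := by
        rw [ann_volume, ← ENNReal.ofReal_mul (by positivity)]
        apply ENNReal.ofReal_le_ofReal
        have ha : ((1/2:ℝ) ^ n) ≠ 0 := by positivity
        have : ((((1/2:ℝ) ^ n) ^ 2)⁻¹) * (((1/2:ℝ) ^ n) ^ 2 * Real.pi
            - ((1/2:ℝ) ^ (n+1)) ^ 2 * Real.pi) = 3 * Real.pi / 4 := by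
          field_simp
          ring
        rw [this]
    _ ≤ ∫⁻ z in Ann n, ENNReal.ofReal (‖z‖ ^ (-2 : ℤ)) := by
        rw [← setLIntegral_const]
        exact setLIntegral_mono (meas_aux (-2)) hconst

lemma integral_ball_top :
    (∫⁻ z in Metric.ball (0:ℂ) 1, ENNReal.ofReal (‖z‖ ^ (-2 : ℤ))) = ⊤ := by
  have hle : (∫⁻ z in ⋃ n, Ann n, ENNReal.ofReal (‖z‖ ^ (-2 : ℤ)))
      ≤ ∫⁻ z in Metric.ball (0:ℂ) 1, ENNReal.ofReal (‖z‖ ^ (-2 : ℤ)) :=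
    lintegral_mono_set (Set.iUnion_subset ann_subset)
  rw [lintegral_iUnion ann_measurable ann_disjoint] at hle
  have htop : (∑' n : ℕ, ∫⁻ z in Ann n, ENNReal.ofReal (‖z‖ ^ (-2 : ℤ))) = ⊤ := by
    refine eq_top_iff.2 ?_
    calc (⊤ : ℝ≥0∞) = ∑' _ : ℕ, ENNReal.ofReal (3 * Real.pi / 4) :=
          (ENNReal.tsum_const_eq_top_of_ne_zero
            ((ENNReal.ofReal_pos.2 (by positivity)).ne')).symm
      _ ≤ _ := ENNReal.tsum_le_tsum fun n => ann_term n
  exact eq_top_iff.2 (htop ▸ hle)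

/-- Second integral: ∞. -/
lemma integral_neg_four :
    (∫⁻ w in Hartogs, ENNReal.ofReal (‖w.2‖ ^ (-4 : ℤ))) = ⊤ := by
  rw [hartogs_lintegral _ (meas_aux (-4))]
  have hae : (fun z : ℂ => ENNReal.ofReal (‖z‖ ^ (-4 : ℤ)) *
      (ENNReal.ofReal ‖z‖ ^ 2 * NNReal.pi))
      =ᵐ[volume.restrict (Metric.ball (0 : ℂ) 1)]
      fun z => ENNReal.ofReal (‖z‖ ^ (-2 : ℤ)) * NNReal.pi := by
    filter_upwards [ae_restrict_of_ae ae_ne_zero] with z hz0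
    have habs : (0:ℝ) < ‖z‖ := norm_pos_iff.2 hz0
    rw [← ENNReal.ofReal_pow (norm_nonneg z), ← mul_assoc,
      ← ENNReal.ofReal_mul (by positivity)]
    have : ‖z‖ ^ (-4 : ℤ) * ‖z‖ ^ 2 = ‖z‖ ^ (-2 : ℤ) := by
      rw [← zpow_natCast ‖z‖ 2, ← zpow_add₀ habs.ne']
      norm_num
    rw [this]
  rw [lintegral_congr_ae hae, lintegral_mul_const _ (meas_aux (-2)), integral_ball_top]
  have hpi : (NNReal.pi : ℝ≥0∞) ≠ 0 := by
    rw [pi_ennreal]; exact (ENNReal.ofReal_pos.2 Real.pi_pos).ne'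
  exact ENNReal.top_mul hpi

theorem one_over_w2_in_bergman_not_W1 :
    DifferentiableOn ℂ (fun w : ℂ × ℂ => w.2⁻¹) Hartogs ∧
    (∫⁻ w in Hartogs, ENNReal.ofReal (‖w.2‖ ^ (-2 : ℤ)))
      = ENNReal.ofReal (Real.pi ^ 2) ∧
    (∫⁻ w in Hartogs, ENNReal.ofReal (‖w.2‖ ^ (-4 : ℤ))) = ⊤ := by
  refine ⟨?_, integral_neg_two, integral_neg_four⟩
  intro w hw
  have hne : w.2 ≠ 0 := by
    intro h
    have h1 := hw.1
    rw [h] at h1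
    simp only [norm_zero] at h1
    exact (norm_nonneg w.1).not_gt h1
  exact ((differentiable_snd.differentiableAt).inv hne).differentiableWithinAt
end
end
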